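/- (Proposition P3) Assume ν̄ᵢ > 0 for all i, U is positive definite and W is positive semidefinite. If X and Y are positive semidefinite n×n matrices with X ⪯ Y, then Π_c(X) ⪯ Π_c(Y), where Π_c(X) = Aᵀ X A + W − Aᵀ X B N̄ M(X)⁻¹ N̄ Bᵀ X A and M(X) = Σ_{I⊆{1,…,m}} η_I² N_I (U + Bᵀ X B) N_I. -/

import Mathlib

open Matrix

/-- The scalar η_I = √(∏_{i∈I} ν̄ᵢ · ∏_{i∉I}(1−ν̄ᵢ)). -/
noncomputable def eta {m : ℕ} (ν : Fin m → ℝ) (I : Finset (Fin m)) : ℝ :=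
  Real.sqrt ((∏ i ∈ I, ν i) * (∏ i ∈ Iᶜ, (1 - ν i)))

/-- The m×m diagonal 0/1 matrix N_I whose i-th diagonal entry is 1 exactly when i ∈ I. -/
def NI {m : ℕ} (I : Finset (Fin m)) : Matrix (Fin m) (Fin m) ℝ :=
  Matrix.diagonal fun i => if i ∈ I then 1 else 0

/-- φ(K,X) = Σ_{I⊆{1,…,m}} η_I² (F_I(K) X F_I(K)ᵀ + V_I(K)), where
F_I(K) = Aᵀ + K N_I Bᵀ and V_I(K) = W + K N_I U N_I Kᵀ. -/
noncomputable def phi {m n : ℕ} (ν : Fin m → ℝ) (A W : Matrix (Fin n) (Fin n) ℝ)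
    (B : Matrix (Fin n) (Fin m) ℝ) (U : Matrix (Fin m) (Fin m) ℝ)
    (K : Matrix (Fin n) (Fin m) ℝ) (X : Matrix (Fin n) (Fin n) ℝ) :
    Matrix (Fin n) (Fin n) ℝ :=
  ∑ I : Finset (Fin m), (eta ν I) ^ 2 •
    ((Aᵀ + K * NI I * Bᵀ) * X * (Aᵀ + K * NI I * Bᵀ)ᵀ + (W + K * NI I * U * NI I * Kᵀ))

/-- M(X) = Σ_{I⊆{1,…,m}} η_I² N_I (U + Bᵀ X B) N_I. -/
noncomputable def Mop {m n : ℕ} (ν : Fin m → ℝ) (B : Matrix (Fin n) (Fin m) ℝ)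
    (U : Matrix (Fin m) (Fin m) ℝ) (X : Matrix (Fin n) (Fin n) ℝ) :
    Matrix (Fin m) (Fin m) ℝ :=
  ∑ I : Finset (Fin m), (eta ν I) ^ 2 • (NI I * (U + Bᵀ * X * B) * NI I)

/-- The modified algebraic Riccati operator
Π_c(X) = Aᵀ X A + W − Aᵀ X B N̄ M(X)⁻¹ N̄ Bᵀ X A, where N̄ = diag(ν̄₁,…,ν̄ₘ). -/
noncomputable def Pic {m n : ℕ} (ν : Fin m → ℝ) (A W : Matrix (Fin n) (Fin n) ℝ)
    (B : Matrix (Fin n) (Fin m) ℝ) (U : Matrix (Fin m) (Fin m) ℝ)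
    (X : Matrix (Fin n) (Fin n) ℝ) : Matrix (Fin n) (Fin n) ℝ :=
  Aᵀ * X * A + W -
    Aᵀ * X * B * Matrix.diagonal ν * (Mop ν B U X)⁻¹ * Matrix.diagonal ν * Bᵀ * X * A

section Aux

lemma psd_smul {k : ℕ} {A : Matrix (Fin k) (Fin k) ℝ} (hA : A.PosSemidef) {c : ℝ}
    (hc : 0 ≤ c) : (c • A).PosSemidef := by
  exact hA.smul hc

lemma pd_smul {k : ℕ} {A : Matrix (Fin k) (Fin k) ℝ} (hA : A.PosDef) {c : ℝ}
    (hc : 0 < c) : (c • A).PosDef := by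
  exact hA.smul hc

lemma psd_sum {k : ℕ} {ι : Type*} (s : Finset ι) (f : ι → Matrix (Fin k) (Fin k) ℝ)
    (h : ∀ i ∈ s, (f i).PosSemidef) : (∑ i ∈ s, f i).PosSemidef := by
  classical
  induction s using Finset.induction_on with
  | empty => simpa using Matrix.PosSemidef.zero
  | insert _ _ hx ih =>
    rw [Finset.sum_insert hx]
    exact (h _ (Finset.mem_insert_self _ _)).add (ih fun i hi => h i (Finset.mem_insert_of_mem hi))

lemma real_psd_mul_mul_transpose {k l : ℕ} {A : Matrix (Fin k) (Fin k) ℝ}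
    (hA : A.PosSemidef) (B : Matrix (Fin l) (Fin k) ℝ) : (B * A * Bᵀ).PosSemidef := by
  rw [← Matrix.conjTranspose_eq_transpose_of_trivial]
  exact hA.mul_mul_conjTranspose_same B

variable {m : ℕ} {ν : Fin m → ℝ} (hν : ∀ i, ν i ∈ Set.Ioc (0 : ℝ) 1)

lemma key_sum (a b : Fin m → ℝ) :
    ∑ I : Finset (Fin m), ((∏ j ∈ I, a j) * ∏ j ∈ Iᶜ, b j) = ∏ j, (a j + b j) := by
  rw [Finset.prod_add, Finset.powerset_univ]
  exact Finset.sum_congr rfl fun I _ => by rw [Finset.compl_eq_univ_sdiff]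

include hν in
lemma eta_sq (I : Finset (Fin m)) :
    (eta ν I) ^ 2 = (∏ i ∈ I, ν i) * ∏ i ∈ Iᶜ, (1 - ν i) := by
  rw [eta, Real.sq_sqrt]
  exact mul_nonneg (Finset.prod_nonneg fun i _ => (hν i).1.le)
    (Finset.prod_nonneg fun i _ => by linarith [(hν i).2])

include hν in
lemma sum_eta_sq : ∑ I : Finset (Fin m), (eta ν I) ^ 2 = 1 := by
  simp_rw [eta_sq hν]
  rw [key_sum]
  simp

include hν in
lemma sum_eta_sq_NI : ∑ I : Finset (Fin m), (eta ν I) ^ 2 • NI I = Matrix.diagonal ν := by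
  ext i j
  simp only [Matrix.sum_apply, Matrix.smul_apply, NI, Matrix.diagonal_apply, smul_eq_mul]
  by_cases h : i = j
  · subst h
    simp only [if_pos rfl, if_true]
    have step : ∀ I : Finset (Fin m), (eta ν I) ^ 2 * (if i ∈ I then (1:ℝ) else 0) =
        (∏ j ∈ I, ν j) * ∏ j ∈ Iᶜ, (if j = i then 0 else 1 - ν j) := by
      intro I
      rw [eta_sq hν]
      by_cases hiI : i ∈ I
      · rw [if_pos hiI, mul_one]
        congr 1
        refine Finset.prod_congr rfl fun j hj => ?_
        rw [if_neg]
        rintro rfl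
        exact (Finset.mem_compl.mp hj) hiI
      · have hz : (∏ j ∈ Iᶜ, (if j = i then (0:ℝ) else 1 - ν j)) = 0 :=
          Finset.prod_eq_zero (Finset.mem_compl.mpr hiI) (if_pos rfl)
        rw [if_neg hiI, mul_zero, hz, mul_zero]
    rw [Finset.sum_congr rfl fun I _ => step I, key_sum]
    rw [Finset.prod_eq_single_of_mem i (Finset.mem_univ i)]
    · simp
    · intro j _ hj
      rw [if_neg hj]
      ring
  · simp [h]

lemma NI_univ : NI (Finset.univ : Finset (Fin m)) = 1 := by
  ext i j
  simp [NI, Matrix.one_apply, Matrix.diagonal_apply]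

include hν in
lemma eta_univ_sq_pos : 0 < (eta ν (Finset.univ : Finset (Fin m))) ^ 2 := by
  rw [eta_sq hν]
  simp only [Finset.compl_univ, Finset.prod_empty, mul_one]
  exact Finset.prod_pos fun i _ => (hν i).1

variable {n : ℕ} {B : Matrix (Fin n) (Fin m) ℝ} {U : Matrix (Fin m) (Fin m) ℝ}
  {X : Matrix (Fin n) (Fin n) ℝ}

include hν in
lemma Mop_posDef (hU : U.PosDef) (hX : X.PosSemidef) : (Mop ν B U X).PosDef := by
  have hC : (U + Bᵀ * X * B).PosDef :=
    hU.add_posSemidef (by simpa using real_psd_mul_mul_transpose hX Bᵀ)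
  have hterm : ∀ I : Finset (Fin m),
      ((eta ν I) ^ 2 • (NI I * (U + Bᵀ * X * B) * NI I)).PosSemidef := by
    intro I
    refine psd_smul ?_ (sq_nonneg _)
    have hNt : (NI I)ᵀ = NI I := Matrix.diagonal_transpose _
    have := real_psd_mul_mul_transpose hC.posSemidef (NI I)
    rwa [hNt] at this
  have hsplit := Finset.add_sum_erase Finset.univ
    (fun I : Finset (Fin m) => (eta ν I) ^ 2 • (NI I * (U + Bᵀ * X * B) * NI I))
    (Finset.mem_univ (Finset.univ : Finset (Fin m)))
  rw [Mop, ← hsplit]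
  refine Matrix.PosDef.add_posSemidef ?_ (psd_sum _ _ fun I _ => hterm I)
  show ((eta ν (Finset.univ : Finset (Fin m))) ^ 2 •
    (NI (Finset.univ : Finset (Fin m)) * (U + Bᵀ * X * B) * NI Finset.univ)).PosDef
  rw [NI_univ, Matrix.one_mul, Matrix.mul_one]
  exact pd_smul hC (eta_univ_sq_pos hν)

end Aux


section Main
variable {m n : ℕ} {ν : Fin m → ℝ}

lemma NI_t {m : ℕ} (I : Finset (Fin m)) : (NI I)ᵀ = NI I := Matrix.diagonal_transpose _

lemma phi_eq (hν : ∀ i, ν i ∈ Set.Ioc (0 : ℝ) 1)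
    (A W : Matrix (Fin n) (Fin n) ℝ) (B : Matrix (Fin n) (Fin m) ℝ)
    (U : Matrix (Fin m) (Fin m) ℝ) (K : Matrix (Fin n) (Fin m) ℝ)
    (X : Matrix (Fin n) (Fin n) ℝ) :
    phi ν A W B U K X = Aᵀ * X * A + W
      + Aᵀ * X * B * Matrix.diagonal ν * Kᵀ
      + K * Matrix.diagonal ν * (Bᵀ * X * A)
      + K * Mop ν B U X * Kᵀ := by
  have hterm : ∀ I : Finset (Fin m),
      (eta ν I) ^ 2 • ((Aᵀ + K * NI I * Bᵀ) * X * (Aᵀ + K * NI I * Bᵀ)ᵀ +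
        (W + K * NI I * U * NI I * Kᵀ))
      = (eta ν I) ^ 2 • (Aᵀ * X * A + W)
        + Aᵀ * X * B * ((eta ν I) ^ 2 • NI I) * Kᵀ
        + K * ((eta ν I) ^ 2 • NI I) * (Bᵀ * X * A)
        + K * ((eta ν I) ^ 2 • (NI I * (U + Bᵀ * X * B) * NI I)) * Kᵀ := by
    intro I
    simp only [transpose_add, transpose_mul, transpose_transpose, NI_t]
    simp only [Matrix.mul_smul, Matrix.smul_mul, ← smul_add]
    congr 1
    simp only [Matrix.mul_add, Matrix.add_mul, Matrix.mul_assoc]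
    abel
  rw [phi, Finset.sum_congr rfl fun I _ => hterm I]
  rw [Finset.sum_add_distrib, Finset.sum_add_distrib, Finset.sum_add_distrib]
  rw [← Finset.sum_smul, sum_eta_sq hν, one_smul]
  have s1 : ∑ I : Finset (Fin m), Aᵀ * X * B * ((eta ν I) ^ 2 • NI I) * Kᵀ
      = Aᵀ * X * B * Matrix.diagonal ν * Kᵀ := by
    rw [← Matrix.sum_mul, ← Matrix.mul_sum, sum_eta_sq_NI hν]
  have s2 : ∑ I : Finset (Fin m), K * ((eta ν I) ^ 2 • NI I) * (Bᵀ * X * A)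
      = K * Matrix.diagonal ν * (Bᵀ * X * A) := by
    rw [← Matrix.sum_mul, ← Matrix.mul_sum, sum_eta_sq_NI hν]
  have s3 : ∑ I : Finset (Fin m), K * ((eta ν I) ^ 2 • (NI I * (U + Bᵀ * X * B) * NI I)) * Kᵀ
      = K * Mop ν B U X * Kᵀ := by
    rw [← Matrix.sum_mul, ← Matrix.mul_sum, Mop]
  rw [s1, s2, s3]

lemma phi_eq_Pic_add (hν : ∀ i, ν i ∈ Set.Ioc (0 : ℝ) 1)
    (A W : Matrix (Fin n) (Fin n) ℝ) (B : Matrix (Fin n) (Fin m) ℝ)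
    (U : Matrix (Fin m) (Fin m) ℝ) (K : Matrix (Fin n) (Fin m) ℝ)
    (X : Matrix (Fin n) (Fin n) ℝ) (hXs : Xᵀ = X)
    (hMd : IsUnit (Mop ν B U X).det) (hMs : (Mop ν B U X)ᵀ = Mop ν B U X) :
    phi ν A W B U K X = Pic ν A W B U X +
      (K + Aᵀ * X * B * Matrix.diagonal ν * (Mop ν B U X)⁻¹) * (Mop ν B U X) *
        (K + Aᵀ * X * B * Matrix.diagonal ν * (Mop ν B U X)⁻¹)ᵀ := by
  set M := Mop ν B U X with hM
  set D := Aᵀ * X * B * Matrix.diagonal ν with hD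
  have h1 : M * M⁻¹ = 1 := Matrix.mul_nonsing_inv _ hMd
  have h2 : M⁻¹ * M = 1 := Matrix.nonsing_inv_mul _ hMd
  have h3 : (M⁻¹)ᵀ = M⁻¹ := by rw [Matrix.transpose_nonsing_inv, hMs]
  have hDt : Dᵀ = Matrix.diagonal ν * (Bᵀ * (X * A)) := by
    rw [hD]
    simp only [transpose_mul, Matrix.diagonal_transpose, transpose_transpose, hXs,
      Matrix.mul_assoc]
  have e1 : (K + D * M⁻¹) * M = K * M + D := by
    rw [Matrix.add_mul, Matrix.mul_assoc, h2, Matrix.mul_one]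
  have e2 : (K + D * M⁻¹)ᵀ = Kᵀ + M⁻¹ * Dᵀ := by
    rw [transpose_add, transpose_mul, h3]
  have e3 : (K + D * M⁻¹) * M * (K + D * M⁻¹)ᵀ
      = K * M * Kᵀ + K * Dᵀ + D * Kᵀ + D * (M⁻¹ * Dᵀ) := by
    have key : K * M * (M⁻¹ * Dᵀ) = K * Dᵀ := by
      rw [Matrix.mul_assoc K M (M⁻¹ * Dᵀ), ← Matrix.mul_assoc M M⁻¹ Dᵀ, h1, Matrix.one_mul]
    rw [e1, e2, Matrix.add_mul, Matrix.mul_add, Matrix.mul_add, key]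
    abel
  rw [phi_eq hν, e3, Pic, hDt]
  simp only [hD, Matrix.mul_assoc, sub_eq_add_neg]
  abel

lemma phi_sub (ν : Fin m → ℝ) (A W : Matrix (Fin n) (Fin n) ℝ)
    (B : Matrix (Fin n) (Fin m) ℝ) (U : Matrix (Fin m) (Fin m) ℝ)
    (K : Matrix (Fin n) (Fin m) ℝ) (X Y : Matrix (Fin n) (Fin n) ℝ) :
    phi ν A W B U K Y - phi ν A W B U K X =
      ∑ I : Finset (Fin m), (eta ν I) ^ 2 •
        ((Aᵀ + K * NI I * Bᵀ) * (Y - X) * (Aᵀ + K * NI I * Bᵀ)ᵀ) := by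
  rw [phi, phi, ← Finset.sum_sub_distrib]
  refine Finset.sum_congr rfl fun I _ => ?_
  rw [← smul_sub]
  congr 1
  simp only [Matrix.mul_sub, Matrix.sub_mul]
  abel
end Main



/-- Proposition P3: with ν̄ᵢ ∈ (0,1], U positive definite and
W positive semidefinite, the operator Π_c is Loewner-monotone on positive
semidefinite matrices: X ⪯ Y implies Π_c(X) ⪯ Π_c(Y). -/
theorem Pic_monotone (m n : ℕ) (hm : 0 < m) (hn : 0 < n) (ν : Fin m → ℝ)
    (hν : ∀ i, ν i ∈ Set.Ioc (0 : ℝ) 1)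
    (A W : Matrix (Fin n) (Fin n) ℝ) (B : Matrix (Fin n) (Fin m) ℝ)
    (U : Matrix (Fin m) (Fin m) ℝ) (hW : W.PosSemidef) (hU : U.PosDef)
    (X Y : Matrix (Fin n) (Fin n) ℝ) (hX : X.PosSemidef) (hY : Y.PosSemidef)
    (hXY : (Y - X).PosSemidef) :
    (Pic ν A W B U Y - Pic ν A W B U X).PosSemidef := by
  classical
  have hMX := Mop_posDef hν (B := B) hU hX
  have hMY := Mop_posDef hν (B := B) hU hY
  have hMdX : IsUnit (Mop ν B U X).det := isUnit_iff_ne_zero.mpr hMX.det_pos.ne'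
  have hMdY : IsUnit (Mop ν B U Y).det := isUnit_iff_ne_zero.mpr hMY.det_pos.ne'
  have hMsX : (Mop ν B U X)ᵀ = Mop ν B U X := by
    rw [← Matrix.conjTranspose_eq_transpose_of_trivial, hMX.1.eq]
  have hMsY : (Mop ν B U Y)ᵀ = Mop ν B U Y := by
    rw [← Matrix.conjTranspose_eq_transpose_of_trivial, hMY.1.eq]
  have hXs : Xᵀ = X := by rw [← Matrix.conjTranspose_eq_transpose_of_trivial, hX.1.eq]
  have hYs : Yᵀ = Y := by rw [← Matrix.conjTranspose_eq_transpose_of_trivial, hY.1.eq]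
  set K : Matrix (Fin n) (Fin m) ℝ :=
    -(Aᵀ * Y * B * Matrix.diagonal ν * (Mop ν B U Y)⁻¹) with hK
  set L : Matrix (Fin n) (Fin m) ℝ :=
    K + Aᵀ * X * B * Matrix.diagonal ν * (Mop ν B U X)⁻¹ with hL
  have hPY : phi ν A W B U K Y = Pic ν A W B U Y := by
    rw [phi_eq_Pic_add hν A W B U K Y hYs hMdY hMsY, hK, neg_add_cancel]
    simp
  have hPX : phi ν A W B U K X = Pic ν A W B U X + L * Mop ν B U X * Lᵀ :=
    phi_eq_Pic_add hν A W B U K X hXs hMdX hMsX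
  have hdecomp : Pic ν A W B U Y - Pic ν A W B U X =
      (phi ν A W B U K Y - phi ν A W B U K X) + L * Mop ν B U X * Lᵀ := by
    rw [hPY, hPX]
    abel
  rw [hdecomp]
  refine Matrix.PosSemidef.add ?_ ?_
  · rw [phi_sub]
    refine psd_sum _ _ fun I _ => psd_smul ?_ (sq_nonneg _)
    exact real_psd_mul_mul_transpose hXY _
  · exact real_psd_mul_mul_transpose hMX.posSemidef L
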